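/- For every real number e with e < d, the function x ↦ x^e · F(x) tends to +∞ as x tends to 0 from the right. -/
import Mathlib


open MeasureTheory Set Filter

/-- For every real number `e` with `e < d`, the function
`x ↦ x^e · F(x)` tends to `+∞` as `x` tends to `0` from the right. -/
theorem ph_dimension_lower
    (ρ ℓ c : ℝ) (hρ : ρ ∈ Set.Ioo (0 : ℝ) 1) (hℓ : 1 < ℓ) (hc : 0 < c)
    (μ : Measure ℝ)
    (hfin : ∀ x : ℝ, 0 < x → μ (Set.Ici x) < ⊤)
    (hpos : 0 < μ (Set.Ioc (ρ * c) c))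
    (hscale : ∀ A : Set ℝ, MeasurableSet A → A ⊆ Set.Ioc 0 c →
      μ ((fun a => ρ * a) '' A) = ENNReal.ofReal ℓ * μ A)
    (F : ℝ → ℝ) (hF : ∀ x : ℝ, F x = (μ (Set.Ici x)).toReal)
    (d : ℝ) (hd : d = Real.log ℓ / Real.log (1 / ρ)) :
    ∀ e : ℝ, e < d →
      Tendsto (fun x : ℝ => x ^ e * F x) (nhdsWithin 0 (Set.Ioi 0)) atTop := by
  obtain ⟨hρ0, hρ1⟩ := hρ
  have hℓ0 : (0:ℝ) < ℓ := lt_trans one_pos hℓ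
  have hρc : 0 < ρ * c := mul_pos hρ0 hc
  -- d > 0 and ρ ^ (-d) = ℓ  (rpow)
  have hlogρ : 0 < Real.log (1/ρ) := Real.log_pos (by rw [one_div]; exact one_lt_inv_iff₀.2 ⟨hρ0, hρ1⟩)
  have hd0 : 0 < d := by
    rw [hd]
    exact div_pos (Real.log_pos hℓ) hlogρ
  have hρd : ρ ^ (-d) = ℓ := by
    have h1 : Real.log (1/ρ) = -Real.log ρ := by rw [one_div, Real.log_inv]
    have h2 : Real.log ρ ≠ 0 := by
      rw [h1] at hlogρ; intro h; rw [h] at hlogρ; simp at hlogρ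
    rw [Real.rpow_def_of_pos hρ0, hd, h1, div_neg, neg_neg, mul_comm,
      div_mul_cancel₀ _ h2, Real.exp_log hℓ0]
  -- the annuli
  set A : ℕ → Set ℝ := fun k => Set.Ioc (ρ^(k+1)*c) (ρ^k*c) with hA
  have hAsub : ∀ k, A k ⊆ Set.Ioc 0 c := by
    intro k y hy
    refine ⟨lt_trans (mul_pos (pow_pos hρ0 _) hc) hy.1, hy.2.trans ?_⟩
    calc ρ^k * c ≤ 1 * c := by
          apply mul_le_mul_of_nonneg_right _ hc.le
          exact pow_le_one₀ hρ0.le hρ1.le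
      _ = c := one_mul c
  have hAmeas : ∀ k, μ (A k) = (ENNReal.ofReal ℓ)^k * μ (A 0) := by
    intro k
    induction k with
    | zero => simp
    | succ k ih =>
      have himg : (fun a => ρ * a) '' A k = A (k+1) := by
        show (ρ * ·) '' Set.Ioc (ρ^(k+1)*c) (ρ^k*c) = _
        rw [Set.image_mul_left_Ioc hρ0]
        simp [hA, pow_succ, mul_comm, mul_assoc, mul_left_comm]
      rw [← himg, hscale _ measurableSet_Ioc (hAsub k), ih, pow_succ]
      ring
  have hA0fin : μ (A 0) < ⊤ := by
    refine lt_of_le_of_lt (measure_mono ?_) (hfin (ρ*c) hρc)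
    intro y hy
    exact le_of_lt (by simpa using hy.1)
  set m : ℝ := (μ (A 0)).toReal with hm
  have hm0 : 0 < m := by
    apply ENNReal.toReal_pos _ hA0fin.ne
    have : A 0 = Set.Ioc (ρ * c) c := by simp [hA]
    rw [this]
    exact hpos.ne'
  -- the key pointwise lower bound
  set K : ℝ := m / ℓ^2 * c ^ d with hK
  have hcd : (0:ℝ) < c ^ d := Real.rpow_pos_of_pos hc d
  have hK0 : 0 < K := mul_pos (div_pos hm0 (pow_pos hℓ0 2)) hcd
  have key : ∀ x : ℝ, x ∈ Set.Ioc 0 (ρ*c) → K * x ^ (-d) ≤ F x := by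
    intro x hx
    obtain ⟨hx0, hxρc⟩ := hx
    -- find N minimal with ρ^N * c < x
    have hex : ∃ N : ℕ, ρ^N * c < x := by
      obtain ⟨N, hN⟩ := exists_pow_lt_of_lt_one (div_pos hx0 hc) hρ1
      exact ⟨N, by rwa [← lt_div_iff₀ hc]⟩
    classical
    have hN2 : 2 ≤ Nat.find hex := by
      rw [Nat.le_find_iff]
      intro n hn
      interval_cases n
      · simp only [pow_zero, one_mul, not_lt]
        exact hxρc.trans (by nlinarith)
      · simp only [pow_one, not_lt]
        exact hxρc
    obtain ⟨k, hk⟩ : ∃ k, Nat.find hex = k + 2 := ⟨Nat.find hex - 2, by omega⟩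
    have hN : ρ^(k+2) * c < x := by rw [← hk]; exact Nat.find_spec hex
    have hxle : x ≤ ρ^(k+1) * c := by
      have := Nat.find_min hex (show k+1 < Nat.find hex by omega)
      linarith [not_lt.1 this]
    -- F x ≥ ℓ^k * m
    have hFge : ℓ^k * m ≤ F x := by
      rw [hF]
      have hsub : A k ⊆ Set.Ici x := fun y hy => le_of_lt (lt_of_le_of_lt hxle hy.1)
      have := ENNReal.toReal_mono (hfin x hx0).ne (measure_mono hsub)
      refine le_trans (le_of_eq ?_) this
      rw [hAmeas k, ENNReal.toReal_mul, ENNReal.toReal_pow, ENNReal.toReal_ofReal hℓ0.le]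
    -- ℓ^k ≥ (x/c)^(-d) / ℓ^2
    have hpowd : (x/c) ^ (-d) < ℓ^(k+2) := by
      have h1 : ρ^(k+2) < x / c := by rwa [lt_div_iff₀ hc]
      have h2 : (x/c) ^ (-d) < (ρ^(k+2) : ℝ) ^ (-d) :=
        Real.rpow_lt_rpow_of_neg (pow_pos hρ0 _) h1 (neg_neg_iff_pos.2 hd0)
      calc (x/c) ^ (-d) < (ρ^(k+2) : ℝ) ^ (-d) := h2
        _ = ℓ^(k+2) := by
            rw [← Real.rpow_natCast ρ (k+2), ← Real.rpow_mul hρ0.le, mul_comm,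
              Real.rpow_mul hρ0.le, hρd, Real.rpow_natCast]
    have hxcd : (x/c) ^ (-d) = x ^ (-d) * c ^ d := by
      rw [div_eq_mul_inv, Real.mul_rpow hx0.le (inv_nonneg.2 hc.le),
        ← Real.rpow_neg_one c, ← Real.rpow_mul hc.le]
      norm_num
    have hstep : K * x ^ (-d) ≤ ℓ^k * m := by
      have hℓ2 : (0:ℝ) < ℓ^2 := pow_pos hℓ0 2
      rw [hK]
      rw [div_mul_eq_mul_div, div_mul_eq_mul_div, div_le_iff₀ hℓ2]
      have : m * ((x/c) ^ (-d)) ≤ m * ℓ^(k+2) :=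
        mul_le_mul_of_nonneg_left hpowd.le hm0.le
      calc m * (c ^ d) * x ^ (-d) = m * ((x/c) ^ (-d)) := by rw [hxcd]; ring
        _ ≤ m * ℓ^(k+2) := this
        _ = ℓ^k * m * ℓ^2 := by ring
    exact hstep.trans hFge
  -- conclude
  intro e he
  have hde : 0 < d - e := by linarith
  have htend : Tendsto (fun x : ℝ => K * x ^ (e - d)) (nhdsWithin 0 (Set.Ioi 0)) atTop := by
    apply Tendsto.const_mul_atTop hK0
    have h1 : Tendsto (fun x : ℝ => (x⁻¹) ^ (d - e)) (nhdsWithin 0 (Set.Ioi 0)) atTop :=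
      (tendsto_rpow_atTop hde).comp tendsto_inv_nhdsGT_zero
    apply h1.congr'
    filter_upwards [self_mem_nhdsWithin] with x hx
    have hx0 : (0:ℝ) < x := hx
    rw [← Real.rpow_neg_one x, ← Real.rpow_mul hx0.le]
    congr 1
    ring
  apply tendsto_atTop_mono' _ _ htend
  have hmem : Set.Ioo (0:ℝ) (ρ*c) ∈ nhdsWithin 0 (Set.Ioi 0) := by
    apply Ioo_mem_nhdsGT_of_mem
    exact ⟨le_refl 0, hρc⟩
  filter_upwards [hmem] with x hx
  have hx0 : (0:ℝ) < x := hx.1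
  have hxe : (0:ℝ) < x ^ e := Real.rpow_pos_of_pos hx0 e
  have h := key x ⟨hx0, hx.2.le⟩
  calc K * x ^ (e - d) = x ^ e * (K * x ^ (-d)) := by
        rw [show e - d = e + (-d) by ring, Real.rpow_add hx0]
        ring
    _ ≤ x ^ e * F x := mul_le_mul_of_nonneg_left h hxe.le
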